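/- An L-structure is a model of T∅_L if and only if it is existentially closed. Consequently, T∅_L axiomatizes the class of existentially closed L-structures, i.e., T∅_L is the model companion of the empty L-theory. -/

import Mathlib

open FirstOrder FirstOrder.Language

universe u v w

/-- A flat formula in the variables `V`: either `R(z̄)` (`pos = true`), `¬ R(z̄)`
(`pos = false`), or `f(z̄) = z'`.  Constant symbols are `0`-ary function symbols. -/
inductive FlatFormula (L : FirstOrder.Language.{v, w}) (V : Type u) where
  | rel {n : ℕ} (R : L.Relations n) (z : Fin n → V) (pos : Bool) : FlatFormula L V
  | func {n : ℕ} (f : L.Functions n) (z : Fin n → V) (z' : V) : FlatFormula L V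

/-- Realization of a flat formula in an `L`-structure `M` under an assignment `v : V → M`. -/
def FlatFormula.Realize {L : FirstOrder.Language.{v, w}} {V : Type u} {M : Type*}
    [L.Structure M] (v : V → M) : FlatFormula L V → Prop
  | .rel R z pos => (Structure.RelMap R (fun i => v (z i)) ↔ pos = true)
  | .func f z z' => Structure.funMap f (fun i => v (z i)) = v z'

/-- A flat diagram (a set of flat formulas) is consistent if no relation instance occurs both
positively and negatively, and each function symbol is assigned at most one value on each
tuple of variables. -/
def FlatConsistent {L : FirstOrder.Language.{v, w}} {V : Type u}
    (Δ : Set (FlatFormula L V)) : Prop :=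
  (∀ {n : ℕ} (R : L.Relations n) (z : Fin n → V),
      ¬ (FlatFormula.rel R z true ∈ Δ ∧ FlatFormula.rel R z false ∈ Δ)) ∧
  (∀ {n : ℕ} (f : L.Functions n) (z : Fin n → V) (z₁ z₂ : V),
      FlatFormula.func f z z₁ ∈ Δ → FlatFormula.func f z z₂ ∈ Δ → z₁ = z₂)

/-- A flat formula mentions a variable on the right of `α ⊕ β` (i.e. among the `ȳ`)
in its argument tuple. -/
def FlatFormula.MentionsRight {L : FirstOrder.Language.{v, w}} {α β : Type u} :
    FlatFormula L (α ⊕ β) → Prop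
  | .rel _ z _ => ∃ i, (z i).isRight
  | .func _ z _ => ∃ i, (z i).isRight

/-- An extension diagram in `(x̄, ȳ)` (with `x̄` indexed by `Fin m` and `ȳ` by `Fin n`):
a finite consistent flat diagram each of whose formulas mentions a variable among the `ȳ`. -/
def IsExtensionDiagram {L : FirstOrder.Language.{v, w}} {m n : ℕ}
    (Δ : Set (FlatFormula L (Fin m ⊕ Fin n))) : Prop :=
  Δ.Finite ∧ FlatConsistent Δ ∧ ∀ φ ∈ Δ, φ.MentionsRight

/-- `M ⊨ φ_Δ(ā, b̄)`: all formulas of `Δ` hold under the assignment `Sum.elim a b`, and the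
combined tuple `ā b̄` is non-redundant (its entries are pairwise distinct). -/
def RealizesExtDiagram {L : FirstOrder.Language.{v, w}} {m n : ℕ} {M : Type*} [L.Structure M]
    (Δ : Set (FlatFormula L (Fin m ⊕ Fin n))) (a : Fin m → M) (b : Fin n → M) : Prop :=
  (∀ φ ∈ Δ, FlatFormula.Realize (Sum.elim a b) φ) ∧ Function.Injective (Sum.elim a b)

/-- `M` is a model of `T^∅_L`: `M` satisfies the sentence
`ψ_Δ = ∀ x̄ (δ(x̄) → ∃ ȳ φ_Δ(x̄, ȳ))` for every extension diagram `Δ`. -/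
def ModelsTEmpty (L : FirstOrder.Language.{v, w}) (M : Type*) [L.Structure M] : Prop :=
  ∀ (m n : ℕ) (Δ : Set (FlatFormula L (Fin m ⊕ Fin n))), IsExtensionDiagram Δ →
    ∀ a : Fin m → M, Function.Injective a → ∃ b : Fin n → M, RealizesExtDiagram Δ a b

/-- An `L`-structure `A` is existentially closed if every existential quantifier-free
statement with parameters in `A` which holds in some extension of `A` already holds in `A`. -/
def IsExistentiallyClosed (L : FirstOrder.Language.{v, w}) (A : Type u) [L.Structure A] :
    Prop :=
  ∀ (B : Type (max u v w)) [L.Structure B] (g : A ↪[L] B)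
    (m n : ℕ) (φ : L.Formula (Fin m ⊕ Fin n)), φ.IsQF →
      ∀ a : Fin m → A,
        (∃ b : Fin n → B, φ.Realize (Sum.elim (fun i => g (a i)) b)) →
        ∃ b : Fin n → A, φ.Realize (Sum.elim a b)

/-- A bundled `L`-structure (used to quantify existentially over `L`-structures). -/
structure BStructure (L : FirstOrder.Language.{v, w}) : Type (max (u + 1) v w) where
  carrier : Type u
  [struc : L.Structure carrier]

attribute [instance] BStructure.struc

instance {L : FirstOrder.Language.{v, w}} : CoeSort (BStructure.{u} L) (Type u) :=
  ⟨BStructure.carrier⟩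

/-- All variables occurring in a flat formula lie in the set `S`. -/
def FlatFormula.VarsIn {L : FirstOrder.Language.{v, w}} {V : Type u} (S : Set V) :
    FlatFormula L V → Prop
  | .rel _ z _ => ∀ i, z i ∈ S
  | .func _ z z' => (∀ i, z i ∈ S) ∧ z' ∈ S

/-- `Δ` is a complete consistent flat diagram in the variables `S`. -/
def FlatCompleteOn {L : FirstOrder.Language.{v, w}} {V : Type u} (S : Set V)
    (Δ : Set (FlatFormula L V)) : Prop :=
  FlatConsistent Δ ∧ (∀ φ ∈ Δ, FlatFormula.VarsIn S φ) ∧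
  (∀ {n : ℕ} (R : L.Relations n) (z : Fin n → V), (∀ i, z i ∈ S) →
      (FlatFormula.rel R z true ∈ Δ ∨ FlatFormula.rel R z false ∈ Δ)) ∧
  (∀ {n : ℕ} (f : L.Functions n) (z : Fin n → V), (∀ i, z i ∈ S) →
      ∃ z' ∈ S, FlatFormula.func f z z' ∈ Δ)


/-! ### Auxiliary machinery -/

section Aux
variable {L : FirstOrder.Language.{v, w}}

/-- A flat formula as a quantifier-free first-order formula. -/
def flatToFormula {V : Type u} : FlatFormula L V → L.Formula V
  | .rel R z true => R.formula fun i => Term.var (z i)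
  | .rel R z false => (R.formula fun i => Term.var (z i)).not
  | .func f z z' => Term.equal (Term.func f fun i => Term.var (z i)) (Term.var z')

theorem flatToFormula_isQF {V : Type u} (ψ : FlatFormula L V) :
    (flatToFormula ψ).IsQF := by
  rcases ψ with ⟨R, z, pos⟩ | ⟨f, z, z'⟩
  · cases pos
    · exact (BoundedFormula.IsAtomic.rel _ _).isQF.not
    · exact (BoundedFormula.IsAtomic.rel _ _).isQF
  · exact (BoundedFormula.IsAtomic.equal _ _).isQF

theorem realize_flatToFormula {V : Type u} {N : Type*} [L.Structure N] (v : V → N)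
    (ψ : FlatFormula L V) : (flatToFormula ψ).Realize v ↔ ψ.Realize v := by
  rcases ψ with ⟨R, z, pos⟩ | ⟨f, z, z'⟩
  · cases pos <;>
      simp [flatToFormula, FlatFormula.Realize, Formula.realize_rel,
        Formula.realize_not]
  · simp [flatToFormula, FlatFormula.Realize, Formula.realize_equal]

/-- Conjunction of a list of formulas. -/
def listConj {α : Type u} (l : List (L.Formula α)) : L.Formula α := l.foldr (· ⊓ ·) ⊤

theorem listConj_isQF {α : Type u} {l : List (L.Formula α)}
    (h : ∀ ψ ∈ l, BoundedFormula.IsQF ψ) : (listConj l).IsQF := by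
  induction l with
  | nil => exact BoundedFormula.IsQF.top
  | cons ψ l ih =>
      exact (h ψ List.mem_cons_self).inf (ih fun χ hχ => h χ (List.mem_cons_of_mem _ hχ))

theorem realize_listConj {α : Type u} {N : Type*} [L.Structure N] {l : List (L.Formula α)}
    {v : α → N} : (listConj l).Realize v ↔ ∀ ψ ∈ l, ψ.Realize v :=
  BoundedFormula.realize_foldr_inf l v default

/-- The formula asserting `x ≠ y`. -/
def neqForm {α : Type u} (x y : α) : L.Formula α :=
  (Term.equal (Term.var x) (Term.var y)).not

/-- A list of formulas asserting that all variables take distinct values. -/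
def distinctList (m n : ℕ) : List (L.Formula (Fin m ⊕ Fin n)) :=
  (((List.finRange m).map Sum.inl) ++ ((List.finRange n).map Sum.inr)).flatMap fun x =>
    (((List.finRange m).map Sum.inl) ++ ((List.finRange n).map Sum.inr)).filterMap fun y =>
      if x = y then none else some (neqForm x y)

theorem mem_distinctList {m n : ℕ} {ψ : L.Formula (Fin m ⊕ Fin n)} :
    ψ ∈ distinctList (L := L) m n ↔ ∃ x y, x ≠ y ∧ ψ = neqForm x y := by
  have hv : ∀ x : Fin m ⊕ Fin n,
      x ∈ ((List.finRange m).map Sum.inl) ++ ((List.finRange n).map Sum.inr) := by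
    intro x; rcases x with i | j <;> simp
  constructor
  · intro h
    simp only [distinctList, List.mem_flatMap, List.mem_filterMap] at h
    obtain ⟨x, -, y, -, hxy⟩ := h
    by_cases hxy' : x = y
    · simp [hxy'] at hxy
    · simp [hxy'] at hxy
      exact ⟨x, y, hxy', hxy.symm⟩
  · rintro ⟨x, y, hxy, rfl⟩
    simp only [distinctList, List.mem_flatMap, List.mem_filterMap]
    exact ⟨x, hv x, y, hv y, by simp [hxy]⟩

theorem distinctList_isQF {m n : ℕ} {ψ : L.Formula (Fin m ⊕ Fin n)}
    (h : ψ ∈ distinctList (L := L) m n) : ψ.IsQF := by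
  obtain ⟨x, y, -, rfl⟩ := mem_distinctList.1 h
  exact (BoundedFormula.IsAtomic.equal _ _).isQF.not

theorem realize_distinctList {m n : ℕ} {N : Type*} [L.Structure N] {v : Fin m ⊕ Fin n → N} :
    (∀ ψ ∈ distinctList (L := L) m n, ψ.Realize v) ↔ Function.Injective v := by
  constructor
  · intro h x y hxy
    by_contra hne
    have := h (neqForm x y) (mem_distinctList.2 ⟨x, y, hne, rfl⟩)
    simp [neqForm, Formula.realize_not, Formula.realize_equal] at this
    exact this hxy
  · intro hinj ψ hψ
    obtain ⟨x, y, hxy, rfl⟩ := mem_distinctList.1 hψ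
    simp only [neqForm, Formula.realize_not, Formula.realize_equal, Term.realize_var]
    exact fun h => hxy (hinj h)

end Aux

section ExtStruc

variable {L : FirstOrder.Language.{v, w}} {M : Type u} [L.Structure M] {m n : ℕ}
  (Δ : Set (FlatFormula L (Fin m ⊕ Fin n))) (a : Fin m → M)

/-- Carrier of the extension structure. -/
def ExtCar (M : Type u) (n : ℕ) : Type (max u v w) :=
  ULift.{max v w} (M ⊕ Fin n)

def extInl : M → ExtCar.{u, v, w} M n := fun x => ⟨Sum.inl x⟩

def extEnc : Fin m ⊕ Fin n → ExtCar.{u, v, w} M n :=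
  fun z => ⟨Sum.elim (fun i => Sum.inl (a i)) Sum.inr z⟩

theorem extInl_injective : Function.Injective (extInl (M := M) (n := n)) := by
  intro x y h
  have := congrArg ULift.down h
  exact Sum.inl.inj this

theorem extEnc_injective (ha : Function.Injective a) :
    Function.Injective (extEnc.{u, v, w} (M := M) (m := m) (n := n) a) := by
  intro x y h
  have h := congrArg ULift.down h
  rcases x with i | j <;> rcases y with i' | j' <;>
    simp only [extEnc, Sum.elim_inl, Sum.elim_inr, Sum.inl.injEq, Sum.inr.injEq,
      reduceCtorEq] at h
  · exact congrArg Sum.inl (ha h)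
  · exact congrArg Sum.inr h

noncomputable def extFun {k : ℕ} (f : L.Functions k) (hn : 0 < n)
    (w : Fin k → ExtCar.{u, v, w} M n) : ExtCar.{u, v, w} M n :=
  @dite _ (∃ zz : (Fin k → Fin m ⊕ Fin n) × (Fin m ⊕ Fin n),
        (w = extEnc a ∘ zz.1) ∧ FlatFormula.func f zz.1 zz.2 ∈ Δ)
    (Classical.propDecidable _)
    (fun h => extEnc a h.choose.2)
    (fun _ => @dite _ (∃ u : Fin k → M, w = extInl ∘ u) (Classical.propDecidable _)
      (fun h2 => extInl (Structure.funMap f h2.choose))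
      (fun _ => ⟨Sum.inr ⟨0, hn⟩⟩))

def extRel {k : ℕ} (R : L.Relations k) (w : Fin k → ExtCar.{u, v, w} M n) : Prop :=
  (∃ zz : Fin k → Fin m ⊕ Fin n, w = extEnc a ∘ zz ∧ FlatFormula.rel R zz true ∈ Δ) ∨
  (∃ u : Fin k → M, w = extInl ∘ u ∧ Structure.RelMap R u)

noncomputable def extStruc (hn : 0 < n) : L.Structure (ExtCar.{u, v, w} M n) where
  funMap f w := extFun Δ a f hn w
  RelMap R w := extRel Δ a R w

variable (hn : 0 < n) (ha : Function.Injective a)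
  (hcons : FlatConsistent Δ) (hmr : ∀ ψ ∈ Δ, FlatFormula.MentionsRight ψ)

theorem ext_not_mix {k : ℕ} {w : Fin k → M} {zz : Fin k → Fin m ⊕ Fin n}
    (hz : ∃ i, (zz i).isRight) (h : extInl ∘ w = extEnc a ∘ zz) : False := by
  obtain ⟨i, hi⟩ := hz
  have h2 := congrFun h i
  rcases hzi : zz i with i' | j
  · rw [hzi] at hi; simp at hi
  · simp only [Function.comp_apply, hzi, extInl, extEnc, Sum.elim_inr] at h2
    cases h2

include hmr in
theorem ext_funMap_inl {k : ℕ} (f : L.Functions k) (w : Fin k → M) :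
    extFun Δ a f hn (extInl ∘ w) = extInl (Structure.funMap f w) := by
  rw [extFun, dif_neg]; refine (dif_pos (⟨w, rfl⟩ : ∃ u : Fin k → M, extInl.{u, v, w} (M := M) (n := n) ∘ w = extInl ∘ u)).trans ?_
  · congr 1
    have h2 : ∃ u : Fin k → M, extInl ∘ w = extInl (M := M) (n := n) ∘ u := ⟨w, rfl⟩
    have hs := h2.choose_spec
    exact congrArg _ (funext fun i => (extInl_injective (congrFun hs i)).symm)
  · rintro ⟨⟨zz, z'⟩, hw, hmem⟩
    exact ext_not_mix a (hmr _ hmem) hw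

include hmr in
theorem ext_relMap_inl {k : ℕ} (R : L.Relations k) (w : Fin k → M) :
    extRel Δ a R (extInl ∘ w) ↔ Structure.RelMap R w := by
  constructor
  · rintro (⟨zz, hw, hmem⟩ | ⟨u, hw, hu⟩)
    · exact absurd hw fun hw => ext_not_mix a (hmr _ hmem) hw
    · have : w = u := funext fun i => extInl_injective (congrFun hw i)
      rwa [this]
  · intro h
    exact Or.inr ⟨w, rfl, h⟩

include hcons hmr ha in
theorem ext_realizes (ψ : FlatFormula L (Fin m ⊕ Fin n)) (hψ : ψ ∈ Δ) :
    @FlatFormula.Realize L _ (ExtCar.{u, v, w} M n) (extStruc Δ a hn) (extEnc a) ψ := by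
  rcases ψ with ⟨R, z, pos⟩ | ⟨f, z, z'⟩
  · show extRel Δ a R (fun i => extEnc a (z i)) ↔ pos = true
    cases pos
    · simp only [Bool.false_eq_true, iff_false]
      rintro (⟨zz, hw, hmem⟩ | ⟨u, hw, hu⟩)
      · have hz : zz = z :=
          funext fun i => extEnc_injective a ha (congrFun hw i).symm
        exact hcons.1 R z ⟨hz ▸ hmem, hψ⟩
      · exact ext_not_mix a (hmr _ hψ) hw.symm
    · simp only [iff_true]
      exact Or.inl ⟨z, rfl, hψ⟩
  · show extFun Δ a f hn (fun i => extEnc a (z i)) = extEnc a z'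
    have hex : ∃ zz : (Fin _ → Fin m ⊕ Fin n) × (Fin m ⊕ Fin n),
        ((fun i => extEnc a (z i)) = extEnc a ∘ zz.1) ∧ FlatFormula.func f zz.1 zz.2 ∈ Δ :=
      ⟨⟨z, z'⟩, rfl, hψ⟩
    rw [extFun, dif_pos hex]
    obtain ⟨h1, h2⟩ := hex.choose_spec
    have hz : hex.choose.1 = z :=
      funext fun i => extEnc_injective a ha (congrFun h1 i).symm
    have hψ' : FlatFormula.func f hex.choose.1 z' ∈ Δ := by rw [hz]; exact hψ
    exact congrArg _ (hcons.2 f _ _ _ h2 hψ')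

end ExtStruc

theorem realize_diagForm {L : FirstOrder.Language.{v, w}} {m n : ℕ}
    {Δ : Set (FlatFormula L (Fin m ⊕ Fin n))} (hfin : Δ.Finite) {N : Type*} [L.Structure N]
    (vv : Fin m ⊕ Fin n → N) :
    (listConj ((hfin.toFinset.toList).map flatToFormula ++ distinctList m n)).Realize vv ↔
      ((∀ ψ ∈ Δ, FlatFormula.Realize vv ψ) ∧ Function.Injective vv) := by
  have hmemΔ : ∀ ψ, ψ ∈ hfin.toFinset.toList ↔ ψ ∈ Δ := by
    intro ψ; rw [Finset.mem_toList, Set.Finite.mem_toFinset]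
  rw [realize_listConj]
  constructor
  · intro h
    refine ⟨fun ψ hψ => ?_, realize_distinctList.1 fun ψ hψ =>
      h ψ (List.mem_append.2 (Or.inr hψ))⟩
    exact (realize_flatToFormula vv ψ).1
      (h _ (List.mem_append.2 (Or.inl (List.mem_map.2 ⟨ψ, (hmemΔ ψ).2 hψ, rfl⟩))))
  · rintro ⟨h1, h2⟩ ψ hψ
    rcases List.mem_append.1 hψ with h | h
    · obtain ⟨χ, hχ, rfl⟩ := List.mem_map.1 h
      exact (realize_flatToFormula vv χ).2 (h1 χ ((hmemΔ χ).1 hχ))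
    · exact realize_distinctList.2 h2 ψ h

section QF
variable {L : FirstOrder.Language.{v, w}} {α : Type u}

/-- All subterms of a term (including itself). -/
def subterms {γ : Type*} : L.Term γ → List (L.Term γ)
  | .var x => [.var x]
  | .func f ts => .func f ts :: (List.finRange _).flatMap fun i => subterms (ts i)

theorem self_mem_subterms {γ : Type*} (t : L.Term γ) : t ∈ subterms t := by
  cases t <;> simp [subterms]

/-- A list of terms is subterm closed. -/
def SubClosed {γ : Type*} (l : List (L.Term γ)) : Prop :=
  ∀ (k : ℕ) (f : L.Functions k) (us : Fin k → L.Term γ),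
    Term.func f us ∈ l → ∀ i, us i ∈ l

theorem subterms_subClosed {γ : Type*} (t : L.Term γ) : SubClosed (subterms t) := by
  induction t with
  | var x => intro k f us h i; simp [subterms] at h
  | func f ts ih =>
      intro k f' us h i
      rw [subterms, List.mem_cons] at h
      rcases h with h | h
      · -- func f' us = func f ts
        injection h with hk hf hts
        subst hk
        obtain rfl := eq_of_heq hts
        rw [subterms]
        exact List.mem_cons_of_mem _ (List.mem_flatMap.2 ⟨i, List.mem_finRange i,
          self_mem_subterms _⟩)
      · obtain ⟨j, -, hj⟩ := List.mem_flatMap.1 h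
        rw [subterms]
        exact List.mem_cons_of_mem _ (List.mem_flatMap.2 ⟨j, List.mem_finRange j,
          ih j k f' us hj i⟩)

theorem SubClosed.append {γ : Type*} {l₁ l₂ : List (L.Term γ)} (h₁ : SubClosed l₁)
    (h₂ : SubClosed l₂) : SubClosed (l₁ ++ l₂) := by
  intro k f us h i
  rcases List.mem_append.1 h with h | h
  · exact List.mem_append.2 (Or.inl (h₁ k f us h i))
  · exact List.mem_append.2 (Or.inr (h₂ k f us h i))

/-- The terms (closed under subterms) occurring in a quantifier-free bounded formula. -/
def qfTerms : ∀ {l : ℕ}, L.BoundedFormula α l → List (L.Term (α ⊕ Fin l))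
  | _, .falsum => []
  | _, .equal t₁ t₂ => subterms t₁ ++ subterms t₂
  | _, .rel _ ts => (List.finRange _).flatMap fun i => subterms (ts i)
  | _, .imp φ ψ => qfTerms φ ++ qfTerms ψ
  | _, .all _ => []

theorem qfTerms_subClosed : ∀ {l : ℕ} (φ : L.BoundedFormula α l), SubClosed (qfTerms φ)
  | _, .falsum => fun _ _ _ h => by simp [qfTerms] at h
  | _, .equal t₁ t₂ => (subterms_subClosed t₁).append (subterms_subClosed t₂)
  | _, .rel R ts => by
      intro k f us h i
      rw [qfTerms] at h ⊢
      obtain ⟨j, -, hj⟩ := List.mem_flatMap.1 h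
      exact List.mem_flatMap.2 ⟨j, List.mem_finRange j, subterms_subClosed _ k f us hj i⟩
  | _, .imp φ ψ => (qfTerms_subClosed φ).append (qfTerms_subClosed ψ)
  | _, .all φ => fun _ _ _ h => by simp [qfTerms] at h

/-- The relation atoms occurring in a quantifier-free bounded formula. -/
def qfRels : ∀ {l : ℕ}, L.BoundedFormula α l →
    List ((k : ℕ) × L.Relations k × (Fin k → L.Term (α ⊕ Fin l)))
  | _, .rel R ts => [⟨_, R, ts⟩]
  | _, .imp φ ψ => qfRels φ ++ qfRels ψ
  | _, _ => []

theorem qfRels_terms {l : ℕ} (φ : L.BoundedFormula α l) :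
    ∀ e ∈ qfRels φ, ∀ i, e.2.2 i ∈ qfTerms φ := by
  induction φ with
  | falsum => simp [qfRels]
  | equal t₁ t₂ => simp [qfRels]
  | rel R ts =>
      rintro e he i
      simp only [qfRels, List.mem_singleton] at he
      subst he
      exact List.mem_flatMap.2 ⟨i, List.mem_finRange i, self_mem_subterms _⟩
  | imp φ ψ ih₁ ih₂ =>
      rintro e he i
      rcases List.mem_append.1 he with h | h
      · exact List.mem_append.2 (Or.inl (ih₁ e h i))
      · exact List.mem_append.2 (Or.inr (ih₂ e h i))
  | all φ ih => simp [qfRels]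

end QF

section Transfer
variable {L : FirstOrder.Language.{v, w}} {α : Type u} {M : Type*} {N : Type*}
  [L.Structure M] [L.Structure N]

/-- All atoms of a formula transfer between two assignments. -/
def AtomTransfer : ∀ {l : ℕ}, (α ⊕ Fin l → M) → (α ⊕ Fin l → N) → L.BoundedFormula α l → Prop
  | _, _, _, .falsum => True
  | _, V, W, .equal t₁ t₂ => ((t₁.realize V = t₂.realize V) ↔ (t₁.realize W = t₂.realize W))
  | _, V, W, .rel R ts =>
      (Structure.RelMap R (fun i => (ts i).realize V) ↔
        Structure.RelMap R fun i => (ts i).realize W)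
  | _, V, W, .imp φ ψ => AtomTransfer V W φ ∧ AtomTransfer V W ψ
  | _, _, _, .all _ => True

theorem realize_transfer : ∀ {l : ℕ} {φ : L.BoundedFormula α l}, φ.IsQF →
    ∀ (v : α → M) (xs : Fin l → M) (w : α → N) (ys : Fin l → N),
    AtomTransfer (Sum.elim v xs) (Sum.elim w ys) φ →
    (φ.Realize v xs ↔ φ.Realize w ys) := by
  intro l φ hqf
  induction hqf with
  | falsum => exact fun _ _ _ _ _ => Iff.rfl
  | of_isAtomic h =>
      cases h with
      | equal t₁ t₂ => exact fun v xs w ys hat => hat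
      | rel R ts => exact fun v xs w ys hat => hat
  | imp h₁ h₂ ih₁ ih₂ =>
      intro v xs w ys hat
      exact imp_congr (ih₁ v xs w ys hat.1) (ih₂ v xs w ys hat.2)

theorem atomTransfer_mk : ∀ {l : ℕ} {φ : L.BoundedFormula α l}, φ.IsQF →
    ∀ (V : α ⊕ Fin l → M) (W : α ⊕ Fin l → N),
    (∀ t₁ ∈ qfTerms φ, ∀ t₂ ∈ qfTerms φ,
      (Term.realize V t₁ = Term.realize V t₂ ↔ Term.realize W t₁ = Term.realize W t₂)) →
    (∀ e ∈ qfRels φ,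
      (Structure.RelMap e.2.1 (fun i => Term.realize V (e.2.2 i)) ↔
        Structure.RelMap e.2.1 fun i => Term.realize W (e.2.2 i))) →
    AtomTransfer V W φ := by
  intro l φ hqf
  induction hqf with
  | falsum => exact fun _ _ _ _ => trivial
  | of_isAtomic h =>
      cases h with
      | equal t₁ t₂ =>
          intro V W heq _
          exact heq t₁ (List.mem_append_left _ (self_mem_subterms t₁))
            t₂ (List.mem_append_right _ (self_mem_subterms t₂))
      | rel R ts =>
          intro V W _ hrel
          exact hrel ⟨_, R, ts⟩ (List.mem_singleton_self _)
  | imp h₁ h₂ ih₁ ih₂ =>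
      intro V W heq hrel
      refine ⟨ih₁ V W (fun t₁ ht₁ t₂ ht₂ =>
          heq t₁ (List.mem_append_left _ ht₁) t₂ (List.mem_append_left _ ht₂))
          (fun e he => hrel e (List.mem_append_left _ he)),
        ih₂ V W (fun t₁ ht₁ t₂ ht₂ =>
          heq t₁ (List.mem_append_right _ ht₁) t₂ (List.mem_append_right _ ht₂))
          (fun e he => hrel e (List.mem_append_right _ he))⟩

end Transfer


section MkFlat
variable {L : FirstOrder.Language.{v, w}} {γ : Type*} {κ κ' : Type u} {B : Type*}
  [L.Structure B] (eB : γ → B) (π : B → κ ⊕ κ')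

noncomputable def mkRelFlat (e : (k : ℕ) × L.Relations k × (Fin k → L.Term γ)) :
    Option (FlatFormula L (κ ⊕ κ')) :=
  @ite _ (∃ i, (π (Term.realize eB (e.2.2 i))).isRight) (Classical.propDecidable _)
    (some (.rel e.2.1 (fun i => π (Term.realize eB (e.2.2 i)))
      (@ite _ (Structure.RelMap e.2.1 fun i => Term.realize eB (e.2.2 i))
        (Classical.propDecidable _) true false)))
    none

noncomputable def mkFunFlat : L.Term γ → Option (FlatFormula L (κ ⊕ κ'))
  | .var _ => none
  | .func f us =>
    @ite _ (∃ i, (π (Term.realize eB (us i))).isRight) (Classical.propDecidable _)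
      (some (.func f (fun i => π (Term.realize eB (us i)))
        (π (Term.realize eB (Term.func f us)))))
      none

theorem mkRelFlat_some {e : (k : ℕ) × L.Relations k × (Fin k → L.Term γ)}
    {ψ : FlatFormula L (κ ⊕ κ')} (h : mkRelFlat eB π e = some ψ) :
    (∃ i, (π (Term.realize eB (e.2.2 i))).isRight) ∧
    ψ = FlatFormula.rel e.2.1 (fun i => π (Term.realize eB (e.2.2 i)))
      (@ite _ (Structure.RelMap e.2.1 fun i => Term.realize eB (e.2.2 i))
        (Classical.propDecidable _) true false) := by
  rw [mkRelFlat] at h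
  by_cases hg : ∃ i, (π (Term.realize eB (e.2.2 i))).isRight
  · rw [if_pos hg] at h
    exact ⟨hg, (Option.some.inj h).symm⟩
  · rw [if_neg hg] at h
    exact absurd h (by simp)

theorem mkFunFlat_some {t : L.Term γ} {ψ : FlatFormula L (κ ⊕ κ')}
    (h : mkFunFlat eB π t = some ψ) :
    ∃ (k : ℕ) (f : L.Functions k) (us : Fin k → L.Term γ), t = Term.func f us ∧
    (∃ i, (π (Term.realize eB (us i))).isRight) ∧
    ψ = FlatFormula.func f (fun i => π (Term.realize eB (us i)))
      (π (Term.realize eB (Term.func f us))) := by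
  match t with
  | .var x => rw [mkFunFlat] at h; exact absurd h (by simp)
  | .func f us =>
    rw [mkFunFlat] at h
    by_cases hg : ∃ i, (π (Term.realize eB (us i))).isRight
    · rw [if_pos hg] at h
      exact ⟨_, f, us, rfl, hg, (Option.some.inj h).symm⟩
    · rw [if_neg hg] at h
      exact absurd h (by simp)

theorem mkFunFlat_mem {k : ℕ} {f : L.Functions k} {us : Fin k → L.Term γ}
    (hg : ∃ i, (π (Term.realize eB (us i))).isRight) :
    mkFunFlat eB π (Term.func f us) =
      some (FlatFormula.func f (fun i => π (Term.realize eB (us i)))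
        (π (Term.realize eB (Term.func f us)))) := by
  rw [mkFunFlat]
  exact if_pos hg

theorem mkRelFlat_mem {e : (k : ℕ) × L.Relations k × (Fin k → L.Term γ)}
    (hg : ∃ i, (π (Term.realize eB (e.2.2 i))).isRight) :
    mkRelFlat eB π e = some (FlatFormula.rel e.2.1 (fun i => π (Term.realize eB (e.2.2 i)))
      (@ite _ (Structure.RelMap e.2.1 fun i => Term.realize eB (e.2.2 i))
        (Classical.propDecidable _) true false)) := by
  rw [mkRelFlat]
  exact if_pos hg

end MkFlat

theorem flat_rel_inj {L : FirstOrder.Language.{v, w}} {V : Type u} {k₁ k₂ : ℕ}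
    {R₁ : L.Relations k₁} {R₂ : L.Relations k₂} {z₁ : Fin k₁ → V} {z₂ : Fin k₂ → V}
    {p₁ p₂ : Bool} (h : (FlatFormula.rel R₁ z₁ p₁ : FlatFormula L V) = FlatFormula.rel R₂ z₂ p₂) :
    ∃ hk : k₁ = k₂, HEq R₁ R₂ ∧ HEq z₁ z₂ ∧ p₁ = p₂ := by
  cases h; exact ⟨rfl, HEq.rfl, HEq.rfl, rfl⟩

theorem flat_func_inj {L : FirstOrder.Language.{v, w}} {V : Type u} {k₁ k₂ : ℕ}
    {f₁ : L.Functions k₁} {f₂ : L.Functions k₂} {z₁ : Fin k₁ → V} {z₂ : Fin k₂ → V}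
    {w₁ w₂ : V} (h : (FlatFormula.func f₁ z₁ w₁ : FlatFormula L V) = FlatFormula.func f₂ z₂ w₂) :
    ∃ hk : k₁ = k₂, HEq f₁ f₂ ∧ HEq z₁ z₂ ∧ w₁ = w₂ := by
  cases h; exact ⟨rfl, HEq.rfl, HEq.rfl, rfl⟩


theorem isExistentiallyClosed_implies_modelsTEmpty (L : FirstOrder.Language.{v, w})
    (M : Type u) [L.Structure M] (hEC : IsExistentiallyClosed L M) : ModelsTEmpty L M := by
  intro m n Δ hΔ a ha
  obtain ⟨hfin, hcons, hmr⟩ := hΔ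
  rcases Nat.eq_zero_or_pos n with rfl | hn
  · refine ⟨Fin.elim0, fun ψ hψ => ?_, ?_⟩
    · exfalso
      rcases ψ with ⟨R, z, pos⟩ | ⟨f, z, z'⟩ <;>
      · obtain ⟨i, hi⟩ := hmr _ hψ
        rcases hz : z i with x | y
        · rw [hz] at hi; simp at hi
        · exact y.elim0
    · intro x y hxy
      rcases x with i | j
      · rcases y with i' | j'
        · exact congrArg Sum.inl (ha hxy)
        · exact j'.elim0
      · exact j.elim0
  · -- build the extension structure and use existential closedness
    letI := extStruc Δ a hn
    let g : M ↪[L] ExtCar.{u, v, w} M n :=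
      { toFun := extInl
        inj' := extInl_injective
        map_fun' := fun f x => (ext_funMap_inl Δ a hn hmr f x).symm
        map_rel' := fun R x => ext_relMap_inl Δ a hmr R x }
    let φΔ : L.Formula (Fin m ⊕ Fin n) :=
      listConj ((hfin.toFinset.toList).map flatToFormula ++ distinctList m n)
    have hmemΔ : ∀ ψ, ψ ∈ hfin.toFinset.toList ↔ ψ ∈ Δ := by
      intro ψ; rw [Finset.mem_toList, Set.Finite.mem_toFinset]
    have hqf : φΔ.IsQF := by
      refine listConj_isQF fun ψ hψ => ?_
      rcases List.mem_append.1 hψ with h | h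
      · obtain ⟨χ, -, rfl⟩ := List.mem_map.1 h
        exact flatToFormula_isQF χ
      · exact distinctList_isQF h
    have hB : ∃ b : Fin n → ExtCar.{u, v, w} M n,
        φΔ.Realize (Sum.elim (fun i => g (a i)) b) := by
      refine ⟨fun j => extEnc a (Sum.inr j), ?_⟩
      have he : Sum.elim (fun i => g (a i)) (fun j => extEnc a (Sum.inr j)) = extEnc a := by
        funext z; rcases z with i | j <;> rfl
      rw [he, realize_diagForm hfin]
      exact ⟨fun ψ hψ => ext_realizes Δ a hn ha hcons hmr ψ hψ, extEnc_injective a ha⟩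
    obtain ⟨b, hb⟩ := hEC (ExtCar.{u, v, w} M n) g m n φΔ hqf a hB
    rw [realize_diagForm hfin] at hb
    exact ⟨b, hb.1, hb.2⟩

theorem modelsTEmpty_implies_isExistentiallyClosed (L : FirstOrder.Language.{v, w})
    (M : Type u) [L.Structure M] (hT : ModelsTEmpty L M) : IsExistentiallyClosed L M := by
  classical
  intro B _iB g m n φ hqf a hexB
  obtain ⟨b, hb⟩ := hexB
  -- M is nonempty
  obtain ⟨b1, -⟩ := hT 0 1 ∅
    ⟨Set.finite_empty, ⟨fun R z h => (Set.notMem_empty _ h.1),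
      fun f z z₁ z₂ h => absurd h (Set.notMem_empty _)⟩,
      fun ψ h => absurd h (Set.notMem_empty _)⟩
    Fin.elim0 (fun x => x.elim0)
  set m0 : M := b1 0 with hm0
  -- the term environment in B
  set eB : (Fin m ⊕ Fin n) ⊕ Fin 0 → B := Sum.elim (Sum.elim (fun i => g (a i)) b) default
    with heB
  -- all terms of φ and the relevant elements of B
  set SB : List B := (qfTerms φ).map (Term.realize eB) ++ (List.ofFn fun i => g (a i))
      ++ List.ofFn b ++ [g m0] with hSB
  have hSB1 : ∀ t ∈ qfTerms φ, Term.realize eB t ∈ SB := by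
    intro t ht
    rw [hSB]
    simp only [List.mem_append]
    exact Or.inl (Or.inl (Or.inl (List.mem_map.2 ⟨t, ht, rfl⟩)))
  have hSB2 : ∀ i, g (a i) ∈ SB := by
    intro i
    rw [hSB]
    simp only [List.mem_append, List.mem_ofFn]
    exact Or.inl (Or.inl (Or.inr ⟨i, rfl⟩))
  have hSB3 : ∀ j, b j ∈ SB := by
    intro j
    rw [hSB]
    simp only [List.mem_append, List.mem_ofFn]
    exact Or.inl (Or.inr ⟨j, rfl⟩)
  have hSB4 : g m0 ∈ SB := by
    rw [hSB]
    simp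
  -- the old elements
  set O : Finset M := SB.toFinset.preimage g g.injective.injOn with hO
  have hOmem : ∀ x : M, x ∈ O ↔ g x ∈ SB := by
    intro x
    rw [hO, Finset.mem_preimage, List.mem_toFinset]
  set p : ℕ := O.card with hp
  set a' : Fin p → M := fun i => ((O.equivFin.symm i : O) : M) with ha'def
  have ha' : Function.Injective a' := fun i j h =>
    O.equivFin.symm.injective (Subtype.coe_injective h)
  have ha'mem : ∀ i, a' i ∈ O := fun i => (O.equivFin.symm i).2
  have ha'surj : ∀ x ∈ O, ∃ i, a' i = x := by
    intro x hx
    exact ⟨O.equivFin ⟨x, hx⟩, by simp [ha'def]⟩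
  -- the new elements
  set NB : Finset B := SB.toFinset.filter (fun s => ¬∃ x : M, g x = s) with hNB
  set kk : ℕ := NB.card with hkk
  set c : Fin kk → B := fun j => ((NB.equivFin.symm j : NB) : B) with hcdef
  have hc : Function.Injective c := fun i j h =>
    NB.equivFin.symm.injective (Subtype.coe_injective h)
  have hcmem : ∀ j, c j ∈ SB ∧ ¬∃ x : M, g x = c j := by
    intro j
    have h0 : c j ∈ NB := (NB.equivFin.symm j).2
    rw [hNB, Finset.mem_filter, List.mem_toFinset] at h0
    exact h0
  have hcsurj : ∀ s ∈ SB, (¬∃ x : M, g x = s) → ∃ j, c j = s := by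
    intro s hs hgs
    exact ⟨NB.equivFin ⟨s, by rw [hNB, Finset.mem_filter, List.mem_toFinset]; exact ⟨hs, hgs⟩⟩,
      by simp [hcdef]⟩
  -- the encoding of variables as elements of B
  set enc : Fin p ⊕ Fin kk → B := Sum.elim (fun i => g (a' i)) c with hencdef
  have henc : Function.Injective enc := by
    rintro (i | j) (i' | j') h <;> rw [hencdef] at h <;>
      simp only [Sum.elim_inl, Sum.elim_inr] at h
    · exact congrArg Sum.inl (ha' (g.injective h))
    · exact absurd ⟨a' i, h⟩ (hcmem j').2
    · exact absurd ⟨a' i', h.symm⟩ (hcmem j).2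
    · exact congrArg Sum.inr (hc h)
  have hne : Nonempty (Fin p ⊕ Fin kk) := by
    have hm0O : m0 ∈ O := (hOmem m0).2 hSB4
    exact ⟨Sum.inl (O.equivFin ⟨m0, hm0O⟩)⟩
  have hrep : ∀ s ∈ SB, ∃ z, enc z = s := by
    intro s hs
    by_cases hgs : ∃ x : M, g x = s
    · obtain ⟨x, rfl⟩ := hgs
      obtain ⟨i, hi⟩ := ha'surj x ((hOmem x).2 hs)
      exact ⟨Sum.inl i, by rw [hencdef]; simp [hi]⟩
    · obtain ⟨j, hj⟩ := hcsurj s hs hgs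
      exact ⟨Sum.inr j, by rw [hencdef]; simpa using hj⟩
  have hrep' : ∀ s : B, ∃ z : Fin p ⊕ Fin kk, s ∈ SB → enc z = s := by
    intro s
    by_cases hs : s ∈ SB
    · obtain ⟨z, hz⟩ := hrep s hs
      exact ⟨z, fun _ => hz⟩
    · exact ⟨hne.some, fun h => absurd h hs⟩
  choose π hπ using hrep'
  have hπinl : ∀ s, s ∈ SB → ∀ x : M, g x = s → ∃ i, π s = Sum.inl i ∧ a' i = x := by
    intro s hs x hx
    rcases hzs : π s with i | j
    · refine ⟨i, rfl, ?_⟩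
      have h2 := hπ s hs
      rw [hzs, hencdef] at h2
      simp only [Sum.elim_inl] at h2
      exact g.injective (h2.trans hx.symm)
    · exfalso
      have h2 := hπ s hs
      rw [hzs, hencdef] at h2
      simp only [Sum.elim_inr] at h2
      exact (hcmem j).2 ⟨x, hx.trans h2.symm⟩
  -- the extension diagram
  set ΔL : List (FlatFormula L (Fin p ⊕ Fin kk)) :=
    (qfRels φ).filterMap (mkRelFlat eB π) ++ (qfTerms φ).filterMap (mkFunFlat eB π) with hΔL
  set Δ : Set (FlatFormula L (Fin p ⊕ Fin kk)) := {ψ | ψ ∈ ΔL} with hΔ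
  have hrelchar : ∀ {k'} (R : L.Relations k') (z : Fin k' → Fin p ⊕ Fin kk) (pos : Bool),
      FlatFormula.rel R z pos ∈ ΔL →
      (∃ i, (z i).isRight) ∧ ((pos = true) ↔ Structure.RelMap R fun i => enc (z i)) := by
    intro k' R z pos h
    rw [hΔL, List.mem_append] at h
    rcases h with h | h
    · obtain ⟨e0, he0, hsome⟩ := List.mem_filterMap.1 h
      obtain ⟨hg, heq⟩ := mkRelFlat_some eB π hsome
      obtain ⟨hk, hR, hz, hpos⟩ := flat_rel_inj heq
      subst hk
      obtain rfl := eq_of_heq hR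
      obtain rfl := eq_of_heq hz
      subst hpos
      refine ⟨hg, ?_⟩
      have hts : ∀ i, Term.realize eB (e0.2.2 i) ∈ SB :=
        fun i => hSB1 _ (qfRels_terms φ e0 he0 i)
      have hrw : (fun i => enc (π (Term.realize eB (e0.2.2 i))))
          = fun i => Term.realize eB (e0.2.2 i) := funext fun i => hπ _ (hts i)
      rw [hrw]
      by_cases hrel : Structure.RelMap e0.2.1 fun i => Term.realize eB (e0.2.2 i)
      · simp [hrel]
      · simp [hrel]
    · obtain ⟨t, -, hsome⟩ := List.mem_filterMap.1 h
      obtain ⟨k0, f0, us, rfl, -, heq⟩ := mkFunFlat_some eB π hsome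
      cases heq
  have hfunchar : ∀ {k'} (f : L.Functions k') (z : Fin k' → Fin p ⊕ Fin kk)
      (z' : Fin p ⊕ Fin kk), FlatFormula.func f z z' ∈ ΔL →
      (∃ i, (z i).isRight) ∧ z' = π (Structure.funMap f fun i => enc (z i)) := by
    intro k' f z z' h
    rw [hΔL, List.mem_append] at h
    rcases h with h | h
    · obtain ⟨e0, -, hsome⟩ := List.mem_filterMap.1 h
      obtain ⟨-, heq⟩ := mkRelFlat_some eB π hsome
      cases heq
    · obtain ⟨t, ht, hsome⟩ := List.mem_filterMap.1 h
      obtain ⟨k0, f0, us, rfl, hg, heq⟩ := mkFunFlat_some eB π hsome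
      obtain ⟨hk, hf, hz, hz'⟩ := flat_func_inj heq
      subst hk
      obtain rfl := eq_of_heq hf
      obtain rfl := eq_of_heq hz
      subst hz'
      refine ⟨hg, ?_⟩
      have hus : ∀ i, us i ∈ qfTerms φ := fun i => qfTerms_subClosed φ _ f us ht i
      have hrw : (fun i => enc (π (Term.realize eB (us i))))
          = fun i => Term.realize eB (us i) := funext fun i => hπ _ (hSB1 _ (hus i))
      rw [hrw]
      rfl
  have hext : IsExtensionDiagram Δ := by
    refine ⟨ΔL.finite_toSet, ⟨?_, ?_⟩, ?_⟩
    · rintro k' R z ⟨h1, h2⟩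
      have c1 := (hrelchar R z true h1).2
      have c2 := (hrelchar R z false h2).2
      rw [iff_true_left rfl] at c1
      simp only [Bool.false_eq_true, false_iff] at c2
      exact c2 c1
    · intro k' f z z₁ z₂ h1 h2
      rw [(hfunchar f z z₁ h1).2, (hfunchar f z z₂ h2).2]
    · intro ψ hψ
      rcases ψ with ⟨R, z, pos⟩ | ⟨f, z, z'⟩
      · exact (hrelchar R z pos hψ).1
      · exact (hfunchar f z z' hψ).1
  obtain ⟨d, hd1, hd2⟩ := hT p kk Δ hext a' ha'
  set ev : Fin p ⊕ Fin kk → M := Sum.elim a' d with hevdef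
  set b'' : Fin n → M := fun j => ev (π (b j)) with hb''def
  set VM : (Fin m ⊕ Fin n) ⊕ Fin 0 → M := Sum.elim (Sum.elim a b'') default with hVM
  -- the key evaluation lemma
  have heval : ∀ t ∈ qfTerms φ, Term.realize VM t = ev (π (Term.realize eB t)) := by
    intro t
    induction t with
    | var x =>
        intro _
        rcases x with (i | j) | x0
        · obtain ⟨i', hπ', ha''⟩ := hπinl _ (hSB2 i) (a i) rfl
          show VM (Sum.inl (Sum.inl i)) = ev (π (eB (Sum.inl (Sum.inl i))))
          have h1 : eB (Sum.inl (Sum.inl i)) = g (a i) := by rw [heB]; rfl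
          have h2 : VM (Sum.inl (Sum.inl i)) = a i := by rw [hVM]; rfl
          rw [h1, h2, hπ', hevdef]
          simp only [Sum.elim_inl]
          exact ha''.symm
        · show VM (Sum.inl (Sum.inr j)) = ev (π (eB (Sum.inl (Sum.inr j))))
          have h1 : eB (Sum.inl (Sum.inr j)) = b j := by rw [heB]; rfl
          have h2 : VM (Sum.inl (Sum.inr j)) = b'' j := by rw [hVM]; rfl
          rw [h1, h2, hb''def]
        · exact x0.elim0
    | func f us ih =>
        intro ht
        have hus : ∀ i, us i ∈ qfTerms φ := fun i => qfTerms_subClosed φ _ f us ht i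
        have hval : ∀ i, Term.realize eB (us i) ∈ SB := fun i => hSB1 _ (hus i)
        have hih : (fun i => Term.realize VM (us i))
            = fun i => ev (π (Term.realize eB (us i))) := funext fun i => ih i (hus i)
        by_cases hg : ∃ i, (π (Term.realize eB (us i))).isRight
        · have hmem : FlatFormula.func f (fun i => π (Term.realize eB (us i)))
              (π (Term.realize eB (Term.func f us))) ∈ Δ := by
            rw [hΔ]
            show _ ∈ ΔL
            rw [hΔL, List.mem_append]
            exact Or.inr (List.mem_filterMap.2 ⟨_, ht, mkFunFlat_mem eB π hg⟩)
          have hflat := hd1 _ hmem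
          show Structure.funMap f (fun i => Term.realize VM (us i))
            = ev (π (Term.realize eB (Term.func f us)))
          rw [hih]
          exact hflat
        · have hL : ∀ i, ∃ i', π (Term.realize eB (us i)) = Sum.inl i' := by
            intro i
            rcases hh : π (Term.realize eB (us i)) with i' | j
            · exact ⟨i', rfl⟩
            · exact absurd ⟨i, by rw [hh]; rfl⟩ hg
          choose ι hι using hL
          have hs : ∀ i, Term.realize eB (us i) = g (a' (ι i)) := by
            intro i
            have h2 := hπ _ (hval i)
            rw [hι i, hencdef] at h2
            exact h2.symm
          have hvB : Term.realize eB (Term.func f us)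
              = g (Structure.funMap f fun i => a' (ι i)) := by
            show Structure.funMap f (fun i => Term.realize eB (us i)) = _
            rw [show (fun i => Term.realize eB (us i)) = fun i => g (a' (ι i)) from funext hs]
            exact (g.map_fun f fun i => a' (ι i)).symm
          obtain ⟨i', hπ', ha''⟩ := hπinl _ (hSB1 _ ht) _ hvB.symm
          show Structure.funMap f (fun i => Term.realize VM (us i))
            = ev (π (Term.realize eB (Term.func f us)))
          rw [hih, hπ', hevdef]
          simp only [Sum.elim_inl]
          rw [ha'']
          congr 1
          funext i
          rw [hι i]
          rfl
  -- equality atoms transfer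
  have heqt : ∀ t₁ ∈ qfTerms φ, ∀ t₂ ∈ qfTerms φ,
      (Term.realize VM t₁ = Term.realize VM t₂ ↔ Term.realize eB t₁ = Term.realize eB t₂) := by
    intro t₁ h₁ t₂ h₂
    rw [heval t₁ h₁, heval t₂ h₂]
    constructor
    · intro h
      have h4 : π (Term.realize eB t₁) = π (Term.realize eB t₂) := hd2 h
      have h5 := congrArg enc h4
      rw [hπ _ (hSB1 _ h₁), hπ _ (hSB1 _ h₂)] at h5
      exact h5
    · intro h
      rw [h]
  -- relation atoms transfer
  have hrelt : ∀ e0 ∈ qfRels φ,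
      ((Structure.RelMap e0.2.1 fun i => Term.realize VM (e0.2.2 i)) ↔
        Structure.RelMap e0.2.1 fun i => Term.realize eB (e0.2.2 i)) := by
    intro e0 he0
    have hts : ∀ i, e0.2.2 i ∈ qfTerms φ := qfRels_terms φ e0 he0
    have hrw : (fun i => Term.realize VM (e0.2.2 i))
        = fun i => ev (π (Term.realize eB (e0.2.2 i))) :=
      funext fun i => heval _ (hts i)
    rw [hrw]
    by_cases hg : ∃ i, (π (Term.realize eB (e0.2.2 i))).isRight
    · have hmem : FlatFormula.rel e0.2.1 (fun i => π (Term.realize eB (e0.2.2 i)))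
          (@ite _ (Structure.RelMap e0.2.1 fun i => Term.realize eB (e0.2.2 i))
            (Classical.propDecidable _) true false) ∈ Δ := by
        rw [hΔ]
        show _ ∈ ΔL
        rw [hΔL, List.mem_append]
        exact Or.inl (List.mem_filterMap.2 ⟨e0, he0, mkRelFlat_mem eB π hg⟩)
      have hflat : (Structure.RelMap e0.2.1 fun i => ev (π (Term.realize eB (e0.2.2 i)))) ↔
          ((@ite _ (Structure.RelMap e0.2.1 fun i => Term.realize eB (e0.2.2 i))
            (Classical.propDecidable _) true false) = true) := hd1 _ hmem
      by_cases hRB : Structure.RelMap e0.2.1 fun i => Term.realize eB (e0.2.2 i)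
      · rw [if_pos hRB] at hflat
        simp only [hRB, iff_true]
        exact hflat.2 rfl
      · rw [if_neg hRB] at hflat
        simp only [hRB, iff_false]
        intro hL
        exact absurd (hflat.1 hL) (by simp)
    · have hL : ∀ i, ∃ i', π (Term.realize eB (e0.2.2 i)) = Sum.inl i' := by
        intro i
        rcases hh : π (Term.realize eB (e0.2.2 i)) with i' | j
        · exact ⟨i', rfl⟩
        · exact absurd ⟨i, by rw [hh]; rfl⟩ hg
      choose ι hι using hL
      have hs : ∀ i, Term.realize eB (e0.2.2 i) = g (a' (ι i)) := by
        intro i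
        have h2 := hπ _ (hSB1 _ (hts i))
        rw [hι i, hencdef] at h2
        simp only [Sum.elim_inl] at h2
        exact h2.symm
      have h1 : (fun i => ev (π (Term.realize eB (e0.2.2 i)))) = fun i => a' (ι i) := by
        funext i
        rw [hι i]
        rfl
      have h2 : (fun i => Term.realize eB (e0.2.2 i)) = fun i => g (a' (ι i)) := funext hs
      rw [h1, h2]
      exact (g.map_rel e0.2.1 fun i => a' (ι i)).symm
  -- conclude
  refine ⟨b'', ?_⟩
  have htr := realize_transfer (M := M) (N := B) hqf (Sum.elim a b'') default
    (Sum.elim (fun i => g (a i)) b) default ?_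
  · exact htr.2 hb
  · rw [show Sum.elim (Sum.elim a b'') (default : Fin 0 → M) = VM from hVM.symm,
      show Sum.elim (Sum.elim (fun i => g (a i)) b) (default : Fin 0 → B) = eB from heB.symm]
    exact atomTransfer_mk hqf VM eB heqt hrelt

/-- An `L`-structure is a model of `T^∅_L` if and only if it is
existentially closed.  Consequently `T^∅_L` axiomatizes the class of existentially
closed `L`-structures, i.e. `T^∅_L` is the model companion of the empty `L`-theory. -/
theorem modelsTEmpty_iff_isExistentiallyClosed (L : FirstOrder.Language.{v, w})
    (M : Type u) [L.Structure M] :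
    ModelsTEmpty L M ↔ IsExistentiallyClosed L M :=
  ⟨fun h => modelsTEmpty_implies_isExistentiallyClosed L M h,
    fun h => isExistentiallyClosed_implies_modelsTEmpty L M h⟩
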